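/- For a region-based test with nonempty region S, combining GFBST-style modalities with posterior-probability modalities under the hypotheses ev-acceptance ⇒ P(H|x) ≥ 1−c and cutoffs c₁=1−c, c₂=c with c<0.5, one obtains the chain of implications: GFBST accepts H ⇒ cutoff test accepts H ⇒ cutoff test does not reject H ⇒ GFBST does not reject H. -/

import Mathlib

open MeasureTheory

def tangentSet {Θ : Type*} (s : Θ → ℝ) (H : Set Θ) : Set Θ :=
  {θ₁ | ∀ θ₀ ∈ H, s θ₁ > s θ₀}

noncomputable def ev {Θ : Type*} [MeasurableSpace Θ] (P : Measure Θ) (s : Θ → ℝ)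
    (H : Set Θ) : ENNReal :=
  1 - P (tangentSet s H)

theorem stmt_18 {Θ : Type*} [MeasurableSpace Θ] (P : Measure Θ) [IsProbabilityMeasure P]
    (s : Θ → ℝ) (c : ENNReal) (hc0 : 0 < c) (hc : c < 1/2)
    (H : Set Θ) (hH : MeasurableSet H) :
    (ev P s Hᶜ ≤ c → P H ≥ 1 - c) ∧
    (P H ≥ 1 - c → P H > c) ∧
    (P H > c → ev P s H > c) := by
  have hc1 : c < 1 := hc.trans (by norm_num)
  have hcne : c ≠ ⊤ := hc1.ne_top
  have hsub1 : tangentSet s Hᶜ ⊆ H := by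
    intro θ hθ
    by_contra hθH
    exact lt_irrefl (s θ) (hθ θ hθH)
  have hsub2 : tangentSet s H ⊆ Hᶜ := by
    intro θ hθ hθH
    exact lt_irrefl (s θ) (hθ θ hθH)
  refine ⟨?_, ?_, ?_⟩
  · intro hev
    have h1 : 1 - P (tangentSet s Hᶜ) ≤ c := hev
    have h2 : 1 - c ≤ P (tangentSet s Hᶜ) := by
      rw [tsub_le_iff_right] at h1 ⊢
      rwa [add_comm]
    exact h2.trans (measure_mono hsub1)
  · intro h
    have hcc : c < 1 - c := by
      rw [(ENNReal.cancel_of_ne hcne).lt_tsub_iff_right]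
      calc c + c = 2 * c := (two_mul c).symm
        _ < 2 * (1/2) := by
          exact ENNReal.mul_lt_mul_iff_right (by norm_num) (by norm_num) |>.mpr hc
        _ = 1 := by rw [one_div, ENNReal.mul_inv_cancel] <;> norm_num
    exact hcc.trans_le h
  · intro h
    have hT : P (tangentSet s H) ≤ P Hᶜ := measure_mono hsub2
    have hHc : P Hᶜ = 1 - P H := by
      rw [measure_compl hH (measure_ne_top P H), measure_univ]
    have hlt : P (tangentSet s H) < 1 - c := by
      rw [hHc] at hT
      refine hT.trans_lt ?_
      exact ((ENNReal.cancel_of_ne ENNReal.one_ne_top).tsub_lt_tsub_iff_left_of_le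
        (ENNReal.cancel_of_ne (measure_ne_top P H)) prob_le_one).mpr h
    show c < 1 - P (tangentSet s H)
    rw [(ENNReal.cancel_of_ne (measure_ne_top P _)).lt_tsub_iff_right, add_comm]
    calc P (tangentSet s H) + c < (1 - c) + c := by
          exact ENNReal.add_lt_add_right hcne hlt
      _ = 1 := tsub_add_cancel_of_le hc1.le
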